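/- Let 0 < α₂ ≤ α₁ ≤ 1, 0 < β₁ ≤ β₂ ≤ 1 and M₁, M₂, N₁, N₂ > 0. Set F₁ = F(α₁, M₁, α₂, M₂) and F₂ = F(β₁, N₁, β₂, N₂), with Tf = f(0), and let γ = max(min(α₁, β₁), min(α₂, β₂)). Then there exist constants 0 < c ≤ C < ∞ and ε₀ > 0 such that c·ε^{2γ/(2γ+1)} ≤ ω₊(ε, F₁, F₂) ≤ C·ε^{2γ/(2γ+1)} for all 0 < ε ≤ ε₀. -/

import Mathlib

open MeasureTheory ProbabilityTheory Real Filter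
open scoped ENNReal NNReal RealInnerProductSpace

noncomputable section

/-- The Hilbert space `H = L²([-1/2, 1/2], ℝ)`. -/
abbrev H : Type :=
  MeasureTheory.Lp (α := ℝ) ℝ 2 (volume.restrict (Set.Icc (-(1:ℝ)/2) (1/2)))

/-- The set of increments `T g - T f` over pairs `f ∈ F`, `g ∈ G` with `‖g - f‖₂ ≤ ε`. -/
def modSet (T : H → ℝ) (F G : Set H) (ε : ℝ) : Set ℝ :=
  {d : ℝ | ∃ f ∈ F, ∃ g ∈ G, ‖g - f‖ ≤ ε ∧ d = T g - T f}

/-- The ordered modulus of continuity `ω(ε, F, G)`. -/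
def omegaMod (T : H → ℝ) (F G : Set H) (ε : ℝ) : ℝ := sSup (modSet T F G ε)

/-- The between-class modulus of continuity `ω₊(ε, F, G)`. -/
def omegaPlus (T : H → ℝ) (F G : Set H) (ε : ℝ) : ℝ :=
  max (omegaMod T F G ε) (omegaMod T G F ε)

/-- All the moduli `ω(ε, F, G)` are finite (the defining suprema are over bounded sets). -/
def FiniteModuli (T : H → ℝ) (F G : Set H) : Prop := ∀ ε : ℝ, BddAbove (modSet T F G ε)

/-- `P` is the law of white-noise data with drift `f` at noise level `n`, in sequence form with
respect to the orthonormal basis `e`: a probability measure on `ℝ^ℕ` whose finite-dimensional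
marginals are products of Gaussians `N(⟪f, e i⟫, 1/n)`. -/
def IsWhiteNoiseLaw (e : ℕ → H) (n : ℕ) (f : H) (P : Measure (ℕ → ℝ)) : Prop :=
  IsProbabilityMeasure P ∧
    ∀ s : Finset ℕ,
      P.map (fun y (i : s) => y i) =
        Measure.pi (fun i : s => gaussianReal ⟪f, e i⟫ (n : ℝ≥0)⁻¹)

/-- The mean squared error `E_f (T̂ - Tf)²` of an estimator `T̂` when the target value is `t`,
as an extended real. -/
def risk (P : Measure (ℕ → ℝ)) (That : (ℕ → ℝ) → ℝ) (t : ℝ) : ℝ≥0∞ :=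
  ∫⁻ y, ENNReal.ofReal ((That y - t) ^ 2) ∂P

/-- The affine estimator `y ↦ a₀ + Σᵢ aᵢ yᵢ`. -/
def affineEst (a0 : ℝ) (a : ℕ → ℝ) (y : ℕ → ℝ) : ℝ := a0 + ∑' i, a i * y i

/-- The variance `(Σᵢ aᵢ²)/n` of an affine estimator under the white-noise law at level `n`. -/
def affineVar (n : ℕ) (a : ℕ → ℝ) : ℝ := (∑' i, a i ^ 2) / n

/-- The mean `a₀ + Σᵢ aᵢ ⟪f, eᵢ⟫` of an affine estimator under `P_f`. -/
def affineMean (e : ℕ → H) (a0 : ℝ) (a : ℕ → ℝ) (f : H) : ℝ := a0 + ∑' i, a i * ⟪f, e i⟫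

/-- The two-sided Hölder class `F(α₁, M₁, α₂, M₂) = F^L(α₁, M₁) ∩ F^R(α₂, M₂)` of functions on
`[-1/2, 1/2]` whose restriction to `[-1/2, 0]` is `(α₁, M₁)`-Hölder and whose restriction to
`[0, 1/2]` is `(α₂, M₂)`-Hölder, viewed as a subset of `L²([-1/2, 1/2])`. -/
def twoSidedHolderClass (α₁ M₁ α₂ M₂ : ℝ) : Set H :=
  {f : H | ∃ g : ℝ → ℝ,
    (∀ x y : ℝ, -(1:ℝ)/2 ≤ x → x ≤ y → y ≤ 0 → |g x - g y| ≤ M₁ * |x - y| ^ α₁) ∧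
    (∀ x y : ℝ, (0:ℝ) ≤ x → x ≤ y → y ≤ 1/2 → |g x - g y| ≤ M₂ * |x - y| ^ α₂) ∧
    ∀ᵐ x ∂(volume.restrict (Set.Icc (-(1:ℝ)/2) (1/2))), f x = g x}

lemma aux_add_rpow {u v a : ℝ} (hu : 0 ≤ u) (hv : 0 ≤ v) (ha : 0 ≤ a) (ha1 : a ≤ 1) :
    (u + v) ^ a ≤ u ^ a + v ^ a := by
  have h := NNReal.rpow_add_le_add_rpow u.toNNReal v.toNNReal ha ha1
  have h2 := (NNReal.coe_le_coe).mpr h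
  rw [NNReal.coe_add, NNReal.coe_rpow, NNReal.coe_rpow, NNReal.coe_rpow, NNReal.coe_add,
    Real.coe_toNNReal u hu, Real.coe_toNNReal v hv] at h2
  exact h2

lemma aux_rpow_sub' {a u v : ℝ} (ha : 0 ≤ a) (ha1 : a ≤ 1) (h0 : 0 ≤ u) (huv : u ≤ v) :
    v ^ a - u ^ a ≤ (v - u) ^ a := by
  have h1 : v = (v - u) + u := by ring
  have h2 : v ^ a ≤ (v - u) ^ a + u ^ a := by
    calc v ^ a = ((v - u) + u) ^ a := by rw [← h1]
    _ ≤ (v - u) ^ a + u ^ a := aux_add_rpow (by linarith) h0 ha ha1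
  linarith

lemma aux_abs_rpow_sub (a : ℝ) (ha : 0 ≤ a) (ha1 : a ≤ 1) (x y : ℝ) :
    |(|x| ^ a) - |y| ^ a| ≤ |x - y| ^ a := by
  have key : ∀ s t : ℝ, |t| ≤ |s| → |s| ^ a - |t| ^ a ≤ |s - t| ^ a := by
    intro s t hts
    have h1 : |s| ^ a - |t| ^ a ≤ (|s| - |t|) ^ a :=
      aux_rpow_sub' ha ha1 (abs_nonneg t) hts
    have h2 : (|s| - |t|) ^ a ≤ |s - t| ^ a :=
      Real.rpow_le_rpow (by linarith) (by
        have := abs_sub_abs_le_abs_sub s t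
        linarith) ha
    linarith
  rcases le_total (|y|) (|x|) with h | h
  · rw [abs_of_nonneg (by
      have := Real.rpow_le_rpow (abs_nonneg y) h ha; linarith)]
    exact key x y h
  · rw [abs_of_nonpos (by
      have := Real.rpow_le_rpow (abs_nonneg x) h ha; linarith)]
    have := key y x h
    rw [abs_sub_comm y x] at this
    linarith

lemma aux_bump_holder {K a : ℝ} (h : ℝ) (hK : 0 ≤ K) (ha : 0 < a) (ha1 : a ≤ 1) (x y : ℝ) :
    |max (h - K * |x| ^ a) 0 - max (h - K * |y| ^ a) 0| ≤ K * |x - y| ^ a := by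
  have h1 := abs_max_sub_max_le_abs (h - K * |x| ^ a) (h - K * |y| ^ a) 0
  have h2 : |(h - K * |x| ^ a) - (h - K * |y| ^ a)| = K * |(|y| ^ a) - |x| ^ a| := by
    rw [show (h - K * |x| ^ a) - (h - K * |y| ^ a) = K * (|y| ^ a - |x| ^ a) by ring,
      abs_mul, abs_of_nonneg hK]
  have h3 : |(|y| ^ a) - |x| ^ a| ≤ |y - x| ^ a := aux_abs_rpow_sub a ha.le ha1 y x
  rw [abs_sub_comm y x] at h3
  calc |max (h - K * |x| ^ a) 0 - max (h - K * |y| ^ a) 0|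
      ≤ K * |(|y| ^ a) - |x| ^ a| := by rw [← h2]; exact h1
    _ ≤ K * |x - y| ^ a := by exact mul_le_mul_of_nonneg_left h3 hK


lemma aux_two_bound {u : ℝ → ℝ} {K₁ K₂ a₁ a₂ : ℝ} (hK₁ : 0 ≤ K₁) (hK₂ : 0 ≤ K₂)
    (ha₁ : 0 < a₁) (ha₂ : 0 < a₂)
    (hL : ∀ x y : ℝ, -(1:ℝ)/2 ≤ x → x ≤ y → y ≤ 0 → |u x - u y| ≤ K₁ * |x - y| ^ a₁)
    (hR : ∀ x y : ℝ, (0:ℝ) ≤ x → x ≤ y → y ≤ 1/2 → |u x - u y| ≤ K₂ * |x - y| ^ a₂) :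
    ∀ x ∈ Set.Icc (-(1:ℝ)/2) (1/2), ∀ y ∈ Set.Icc (-(1:ℝ)/2) (1/2), x ≤ y →
      |u x - u y| ≤ K₁ * |x - y| ^ a₁ + K₂ * |x - y| ^ a₂ := by
  intro x hx y hy hxy
  have hpos₁ : (0:ℝ) ≤ K₁ * |x - y| ^ a₁ :=
    mul_nonneg hK₁ (Real.rpow_nonneg (abs_nonneg _) _)
  have hpos₂ : (0:ℝ) ≤ K₂ * |x - y| ^ a₂ :=
    mul_nonneg hK₂ (Real.rpow_nonneg (abs_nonneg _) _)
  rcases le_or_gt y 0 with hy0 | hy0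
  · have := hL x y hx.1 hxy hy0
    linarith
  rcases le_or_gt 0 x with hx0 | hx0
  · have := hR x y hx0 hxy hy.2
    linarith
  · have h1 := hL x 0 hx.1 hx0.le le_rfl
    have h2 := hR 0 y le_rfl hy0.le hy.2
    have e1 : |x - 0| ^ a₁ ≤ |x - y| ^ a₁ := by
      apply Real.rpow_le_rpow (abs_nonneg _) _ ha₁.le
      rw [abs_of_nonpos (by linarith), abs_of_nonpos (by linarith)]
      linarith
    have e2 : |0 - y| ^ a₂ ≤ |x - y| ^ a₂ := by
      apply Real.rpow_le_rpow (abs_nonneg _) _ ha₂.le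
      rw [abs_of_nonpos (by linarith), abs_of_nonpos (by linarith)]
      linarith
    have := abs_sub_le (u x) (u 0) (u y)
    have t1 : K₁ * |x - 0| ^ a₁ ≤ K₁ * |x - y| ^ a₁ := mul_le_mul_of_nonneg_left e1 hK₁
    have t2 : K₂ * |0 - y| ^ a₂ ≤ K₂ * |x - y| ^ a₂ := mul_le_mul_of_nonneg_left e2 hK₂
    linarith

lemma aux_contOn {u : ℝ → ℝ} {K₁ K₂ a₁ a₂ : ℝ} (hK₁ : 0 ≤ K₁) (hK₂ : 0 ≤ K₂)
    (ha₁ : 0 < a₁) (ha₂ : 0 < a₂)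
    (hL : ∀ x y : ℝ, -(1:ℝ)/2 ≤ x → x ≤ y → y ≤ 0 → |u x - u y| ≤ K₁ * |x - y| ^ a₁)
    (hR : ∀ x y : ℝ, (0:ℝ) ≤ x → x ≤ y → y ≤ 1/2 → |u x - u y| ≤ K₂ * |x - y| ^ a₂) :
    ContinuousOn u (Set.Icc (-(1:ℝ)/2) (1/2)) := by
  have hB := aux_two_bound hK₁ hK₂ ha₁ ha₂ hL hR
  have hB' : ∀ x ∈ Set.Icc (-(1:ℝ)/2) (1/2), ∀ y ∈ Set.Icc (-(1:ℝ)/2) (1/2),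
      |u x - u y| ≤ K₁ * |x - y| ^ a₁ + K₂ * |x - y| ^ a₂ := by
    intro x hx y hy
    rcases le_total x y with h | h
    · exact hB x hx y hy h
    · have := hB y hy x hx h
      rw [abs_sub_comm (u x) (u y), abs_sub_comm x y]
      exact this
  rw [Metric.continuousOn_iff]
  intro b hb ε hε
  refine ⟨min ((ε/(2*(K₁+1))) ^ a₁⁻¹) ((ε/(2*(K₂+1))) ^ a₂⁻¹), by positivity, ?_⟩
  intro a ha hd
  have key : ∀ (K c : ℝ), 0 ≤ K → 0 < c → dist a b < (ε/(2*(K+1))) ^ c⁻¹ →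
      K * |a - b| ^ c < ε / 2 := by
    intro K c hK hc hlt
    have h0 : (0:ℝ) < ε/(2*(K+1)) := by positivity
    have h1 : |a - b| ^ c < ((ε/(2*(K+1))) ^ c⁻¹) ^ c := by
      apply Real.rpow_lt_rpow (abs_nonneg _) _ hc
      rw [Real.dist_eq] at hlt; exact hlt
    rw [Real.rpow_inv_rpow h0.le hc.ne'] at h1
    have h2 : K * |a - b| ^ c ≤ K * (ε/(2*(K+1))) := by
      rcases eq_or_lt_of_le hK with h | h
      · simp [← h]
      · exact (mul_le_mul_iff_right₀ h).mpr h1.le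
    have h3 : K * (ε/(2*(K+1))) < ε / 2 := by
      have he : K * (ε/(2*(K+1))) = ε/2 * (K/(K+1)) := by
        field_simp
      have hlt1 : K / (K + 1) < 1 := by
        rw [div_lt_one (by linarith)]; linarith
      rw [he]
      calc ε/2 * (K/(K+1)) < ε/2 * 1 := by
            exact mul_lt_mul_of_pos_left hlt1 (by linarith)
        _ = ε/2 := mul_one _
    linarith
  have k1 := key K₁ a₁ hK₁ ha₁ (lt_of_lt_of_le hd (min_le_left _ _))
  have k2 := key K₂ a₂ hK₂ ha₂ (lt_of_lt_of_le hd (min_le_right _ _))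
  have := hB' a ha b hb
  rw [Real.dist_eq]
  linarith


lemma aux_toReal_const_mul (c w : ℝ) (hc : 0 ≤ c) (hw : 0 ≤ w) :
    ((‖c‖₊ : ℝ≥0∞) * (ENNReal.ofReal w) ^ ((1:ℝ)/2)).toReal = c * w ^ ((1:ℝ)/2) := by
  rw [ENNReal.toReal_mul, ← ENNReal.toReal_rpow, ENNReal.toReal_ofReal hw]
  congr 1
  simp [Real.norm_eq_abs, abs_of_nonneg hc]

lemma aux_norm_lower (F : H) (d : ℝ → ℝ)
    (hae : ∀ᵐ x ∂(volume.restrict (Set.Icc (-(1:ℝ)/2) (1/2))), F x = d x)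
    (c a b : ℝ) (hc : 0 ≤ c) (hab : a ≤ b)
    (hsub : Set.Icc a b ⊆ Set.Icc (-(1:ℝ)/2) (1/2))
    (hlow : ∀ x ∈ Set.Icc a b, c ≤ |d x|) :
    c * (b - a) ^ ((1:ℝ)/2) ≤ ‖F‖ := by
  set μ := volume.restrict (Set.Icc (-(1:ℝ)/2) (1/2)) with hμ
  have h1 : eLpNorm (⇑F) 2 μ = eLpNorm d 2 μ := eLpNorm_congr_ae hae
  have h2 : eLpNorm ((Set.Icc a b).indicator (fun _ => c)) 2 μ ≤ eLpNorm d 2 μ := by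
    apply eLpNorm_mono
    intro x
    by_cases hx : x ∈ Set.Icc a b
    · rw [Set.indicator_of_mem hx]
      simp only [Real.norm_eq_abs, abs_of_nonneg hc]
      exact hlow x hx
    · rw [Set.indicator_of_notMem hx]
      simp
  have h3 : eLpNorm ((Set.Icc a b).indicator (fun _ => c)) 2 μ
      = (‖c‖₊ : ℝ≥0∞) * (μ (Set.Icc a b)) ^ ((1:ℝ)/2) := by
    rw [eLpNorm_indicator_const measurableSet_Icc two_ne_zero (by norm_num)]
    norm_num [enorm_eq_nnnorm]
  have h4 : μ (Set.Icc a b) = ENNReal.ofReal (b - a) := by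
    rw [hμ, Measure.restrict_apply measurableSet_Icc, Set.inter_eq_left.mpr hsub,
      Real.volume_Icc]
  rw [Lp.norm_def, h1]
  have h5 : ((‖c‖₊ : ℝ≥0∞) * (ENNReal.ofReal (b - a)) ^ ((1:ℝ)/2)).toReal
      ≤ (eLpNorm d 2 μ).toReal := by
    apply ENNReal.toReal_mono
    · rw [← h1]; exact Lp.eLpNorm_ne_top F
    · rw [← h4, ← h3]; exact h2
  rwa [aux_toReal_const_mul c (b - a) hc (by linarith)] at h5

lemma aux_norm_upper (F : H) (d : ℝ → ℝ)
    (hae : ∀ᵐ x ∂(volume.restrict (Set.Icc (-(1:ℝ)/2) (1/2))), F x = d x)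
    (c a b : ℝ) (hc : 0 ≤ c) (hab : a ≤ b)
    (hbd : ∀ x, |d x| ≤ c) (hsupp : ∀ x, x ∉ Set.Icc a b → d x = 0) :
    ‖F‖ ≤ c * (b - a) ^ ((1:ℝ)/2) := by
  set μ := volume.restrict (Set.Icc (-(1:ℝ)/2) (1/2)) with hμ
  have h1 : eLpNorm (⇑F) 2 μ = eLpNorm d 2 μ := eLpNorm_congr_ae hae
  have h2 : eLpNorm d 2 μ ≤ eLpNorm ((Set.Icc a b).indicator (fun _ => c)) 2 μ := by
    apply eLpNorm_mono
    intro x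
    by_cases hx : x ∈ Set.Icc a b
    · rw [Set.indicator_of_mem hx]
      simp only [Real.norm_eq_abs, abs_of_nonneg hc]
      exact hbd x
    · rw [Set.indicator_of_notMem hx, hsupp x hx]
  have h3 : eLpNorm ((Set.Icc a b).indicator (fun _ => c)) 2 μ
      = (‖c‖₊ : ℝ≥0∞) * (μ (Set.Icc a b)) ^ ((1:ℝ)/2) := by
    rw [eLpNorm_indicator_const measurableSet_Icc two_ne_zero (by norm_num)]
    norm_num [enorm_eq_nnnorm]
  have h4 : μ (Set.Icc a b) ≤ ENNReal.ofReal (b - a) := by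
    rw [hμ, Measure.restrict_apply measurableSet_Icc]
    calc volume (Set.Icc a b ∩ Set.Icc (-(1:ℝ)/2) (1/2)) ≤ volume (Set.Icc a b) :=
          measure_mono Set.inter_subset_left
      _ = ENNReal.ofReal (b - a) := Real.volume_Icc
  have h5 : eLpNorm d 2 μ ≤ (‖c‖₊ : ℝ≥0∞) * (ENNReal.ofReal (b - a)) ^ ((1:ℝ)/2) := by
    refine (h2.trans_eq h3).trans ?_
    exact mul_le_mul_right (ENNReal.rpow_le_rpow h4 (by norm_num)) _
  rw [Lp.norm_def, h1]
  calc (eLpNorm d 2 μ).toReal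
      ≤ ((‖c‖₊ : ℝ≥0∞) * (ENNReal.ofReal (b - a)) ^ ((1:ℝ)/2)).toReal := by
        apply ENNReal.toReal_mono _ h5
        exact ENNReal.mul_ne_top ENNReal.coe_ne_top
          (ENNReal.rpow_ne_top_of_nonneg (by norm_num) ENNReal.ofReal_ne_top)
    _ = c * (b - a) ^ ((1:ℝ)/2) := aux_toReal_const_mul c (b - a) hc (by linarith)


def auxC (K γ : ℝ) : ℝ :=
  max (2 / ((1/2:ℝ) ^ ((1:ℝ)/2))) ((2 * (2*K) ^ (1/(2*γ))) ^ (2*γ/(2*γ+1)))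

lemma auxC_pos (K γ : ℝ) : 0 < auxC K γ :=
  lt_max_of_lt_left (by positivity)

lemma aux_exp_identity {γ : ℝ} (hγ : 0 < γ) : (1 + 1/(2*γ)) * (2*γ/(2*γ+1)) = 1 := by
  field_simp

lemma aux_arith {K γ t ε : ℝ} (hK : 0 < K) (hγ : 0 < γ) (hε : 0 < ε) (hε1 : ε ≤ 1)
    (ht : 0 < t)
    (key : t / 2 * (min (1/2) ((t / (2 * K)) ^ (1/γ))) ^ ((1:ℝ)/2) ≤ ε) :
    t ≤ auxC K γ * ε ^ (2*γ/(2*γ+1)) := by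
  set p := 2*γ/(2*γ+1) with hp
  set q := 1/(2*γ) with hq
  have hppos : 0 < p := by rw [hp]; positivity
  have hp1 : p ≤ 1 := by
    rw [hp, div_le_one (by linarith)]; linarith
  have hqpos : 0 < q := by rw [hq]; positivity
  have hεp : ε ≤ ε ^ p := by
    calc ε = ε ^ (1:ℝ) := (Real.rpow_one ε).symm
    _ ≤ ε ^ p := Real.rpow_le_rpow_of_exponent_ge hε hε1 hp1
  have hεppos : 0 < ε ^ p := Real.rpow_pos_of_pos hε p
  rcases min_cases (1/2 : ℝ) ((t / (2 * K)) ^ (1/γ)) with ⟨hmin, _⟩ | ⟨hmin, _⟩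
  · rw [hmin] at key
    have hhalf : (0:ℝ) < (1/2:ℝ) ^ ((1:ℝ)/2) := by positivity
    have h1 : t ≤ 2 / ((1/2:ℝ) ^ ((1:ℝ)/2)) * ε := by
      rw [div_mul_eq_mul_div, le_div_iff₀ hhalf]
      nlinarith
    calc t ≤ 2 / ((1/2:ℝ) ^ ((1:ℝ)/2)) * ε := h1
      _ ≤ 2 / ((1/2:ℝ) ^ ((1:ℝ)/2)) * ε ^ p := by
          exact mul_le_mul_of_nonneg_left hεp (by positivity)
      _ ≤ auxC K γ * ε ^ p := by
          exact mul_le_mul_of_nonneg_right (le_max_left _ _) hεppos.le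
  · rw [hmin] at key
    have htK : (0:ℝ) < t / (2*K) := by positivity
    have e1 : ((t / (2 * K)) ^ (1/γ)) ^ ((1:ℝ)/2) = (t / (2*K)) ^ q := by
      rw [← Real.rpow_mul htK.le, hq]
      congr 1
      field_simp
    rw [e1, Real.div_rpow ht.le (by positivity)] at key
    have e2 : t / 2 * (t ^ q / (2*K) ^ q) = t ^ (1 + q) / (2 * (2*K) ^ q) := by
      rw [Real.rpow_add ht, Real.rpow_one]
      field_simp
    rw [e2] at key
    have hD : (0:ℝ) < 2 * (2*K) ^ q := by positivity
    have key2 : t ^ (1 + q) ≤ 2 * (2*K) ^ q * ε := by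
      rw [div_le_iff₀ hD] at key
      linarith [key]
    have e3 : t = (t ^ (1 + q)) ^ p := by
      rw [← Real.rpow_mul ht.le, hq, aux_exp_identity hγ, Real.rpow_one]
    have h4 : (t ^ (1 + q)) ^ p ≤ (2 * (2*K) ^ q * ε) ^ p :=
      Real.rpow_le_rpow (Real.rpow_nonneg ht.le _) key2 hppos.le
    have h5 : (2 * (2*K) ^ q * ε) ^ p = (2 * (2*K) ^ q) ^ p * ε ^ p :=
      Real.mul_rpow (by positivity) hε.le
    calc t = (t ^ (1 + q)) ^ p := e3
      _ ≤ (2 * (2*K) ^ q) ^ p * ε ^ p := by rw [← h5]; exact h4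
      _ ≤ auxC K γ * ε ^ p := by
          refine mul_le_mul_of_nonneg_right ?_ hεppos.le
          rw [hq, hp]
          exact le_max_right _ _


lemma aux_rpow_exp_mono {x a b : ℝ} (hx0 : 0 ≤ x) (hx1 : x ≤ 1) (ha : 0 < a) (hab : a ≤ b) :
    x ^ b ≤ x ^ a := by
  rcases eq_or_lt_of_le hx0 with h | h
  · rw [← h, Real.zero_rpow (by linarith : b ≠ 0), Real.zero_rpow ha.ne']
  · exact Real.rpow_le_rpow_of_exponent_ge h hx1 hab

lemma aux_elem
    {α₁ α₂ β₁ β₂ M₁ M₂ N₁ N₂ : ℝ}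
    (hα₂ : 0 < α₂) (hα : α₂ ≤ α₁) (hα₁ : α₁ ≤ 1)
    (hβ₁ : 0 < β₁) (hβ : β₁ ≤ β₂) (hβ₂ : β₂ ≤ 1)
    (hM₁ : 0 < M₁) (hM₂ : 0 < M₂) (hN₁ : 0 < N₁) (hN₂ : 0 < N₂)
    (rf rg : ℝ → ℝ)
    (hf1 : ∀ x y : ℝ, -(1:ℝ)/2 ≤ x → x ≤ y → y ≤ 0 → |rf x - rf y| ≤ M₁ * |x - y| ^ α₁)
    (hf2 : ∀ x y : ℝ, (0:ℝ) ≤ x → x ≤ y → y ≤ 1/2 → |rf x - rf y| ≤ M₂ * |x - y| ^ α₂)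
    (hg1 : ∀ x y : ℝ, -(1:ℝ)/2 ≤ x → x ≤ y → y ≤ 0 → |rg x - rg y| ≤ N₁ * |x - y| ^ β₁)
    (hg2 : ∀ x y : ℝ, (0:ℝ) ≤ x → x ≤ y → y ≤ 1/2 → |rg x - rg y| ≤ N₂ * |x - y| ^ β₂)
    (fh gh : H)
    (hfa : ∀ᵐ x ∂(volume.restrict (Set.Icc (-(1:ℝ)/2) (1/2))), fh x = rf x)
    (hga : ∀ᵐ x ∂(volume.restrict (Set.Icc (-(1:ℝ)/2) (1/2))), gh x = rg x)
    {ε : ℝ} (hε : 0 < ε) (hε1 : ε ≤ 1) (hn : ‖gh - fh‖ ≤ ε) :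
    |rg 0 - rf 0| ≤
      max (auxC (M₁+N₁) (max (min α₁ β₁) (min α₂ β₂)))
          (auxC (M₂+N₂) (max (min α₁ β₁) (min α₂ β₂))) *
        ε ^ (2 * max (min α₁ β₁) (min α₂ β₂) / (2 * max (min α₁ β₁) (min α₂ β₂) + 1)) := by
  set γ := max (min α₁ β₁) (min α₂ β₂) with hγdef
  have hα₁pos : 0 < α₁ := lt_of_lt_of_le hα₂ hα
  have hβ₂pos : 0 < β₂ := lt_of_lt_of_le hβ₁ hβ
  have hγpos : 0 < γ := lt_max_of_lt_left (lt_min hα₁pos hβ₁)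
  have hεppos : 0 < ε ^ (2*γ/(2*γ+1)) := Real.rpow_pos_of_pos hε _
  set Cf := max (auxC (M₁+N₁) γ) (auxC (M₂+N₂) γ) with hCf
  have hCfpos : 0 < Cf := lt_max_of_lt_left (auxC_pos _ _)
  set d := fun x => rg x - rf x with hd
  have hdae : ∀ᵐ x ∂(volume.restrict (Set.Icc (-(1:ℝ)/2) (1/2))), (gh - fh) x = d x := by
    filter_upwards [Lp.coeFn_sub gh fh, hfa, hga] with x h1 h2 h3
    rw [h1, Pi.sub_apply, h2, h3]
  set t := |rg 0 - rf 0| with htdef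
  have htd : t = |d 0| := rfl
  rcases (abs_nonneg (rg 0 - rf 0)).eq_or_lt with ht0 | ht0
  · rw [htdef, ← ht0]
    exact mul_nonneg hCfpos.le hεppos.le
  -- t > 0
  rcases max_choice (min α₁ β₁) (min α₂ β₂) with hγeq | hγeq
  · -- left side: γ = min α₁ β₁
    set K := M₁ + N₁ with hK
    have hKpos : 0 < K := by positivity
    have hγα : γ ≤ α₁ := by rw [hγdef, hγeq]; exact min_le_left _ _
    have hγβ : γ ≤ β₁ := by rw [hγdef, hγeq]; exact min_le_right _ _
    have hdbound : ∀ x : ℝ, -(1:ℝ)/2 ≤ x → x ≤ 0 → |d x - d 0| ≤ K * |x| ^ γ := by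
      intro x hx1 hx2
      have habs : |x| ≤ 1 := by rw [abs_of_nonpos hx2]; linarith
      have hf := hf1 x 0 hx1 hx2 le_rfl
      have hg := hg1 x 0 hx1 hx2 le_rfl
      rw [sub_zero] at hf hg
      have ef : |x| ^ α₁ ≤ |x| ^ γ := aux_rpow_exp_mono (abs_nonneg x) habs hγpos hγα
      have eg : |x| ^ β₁ ≤ |x| ^ γ := aux_rpow_exp_mono (abs_nonneg x) habs hγpos hγβ
      have : |d x - d 0| ≤ |rg x - rg 0| + |rf x - rf 0| := by
        rw [hd]
        have : rg x - rf x - (rg 0 - rf 0) = (rg x - rg 0) - (rf x - rf 0) := by ring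
        simp only [this]
        exact abs_sub _ _
      have tf : M₁ * |x| ^ α₁ ≤ M₁ * |x| ^ γ := mul_le_mul_of_nonneg_left ef hM₁.le
      have tg : N₁ * |x| ^ β₁ ≤ N₁ * |x| ^ γ := mul_le_mul_of_nonneg_left eg hN₁.le
      rw [hK]
      nlinarith [abs_nonneg (rf x - rf 0), abs_nonneg (rg x - rg 0)]
    set w := min (1/2 : ℝ) ((t / (2 * K)) ^ (1/γ)) with hw
    have hwpos : 0 < w := lt_min (by norm_num) (Real.rpow_pos_of_pos (by positivity) _)
    have hwle : w ≤ 1/2 := min_le_left _ _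
    have hwγ : K * w ^ γ ≤ t / 2 := by
      have h1 : w ^ γ ≤ t / (2 * K) := by
        have h2 : w ^ γ ≤ ((t / (2 * K)) ^ (1/γ)) ^ γ :=
          Real.rpow_le_rpow hwpos.le (min_le_right _ _) hγpos.le
        rwa [one_div, Real.rpow_inv_rpow (by positivity) hγpos.ne'] at h2
      calc K * w ^ γ ≤ K * (t / (2 * K)) := mul_le_mul_of_nonneg_left h1 hKpos.le
        _ = t / 2 := by field_simp
    have hlow : ∀ x ∈ Set.Icc (-w) 0, t / 2 ≤ |d x| := by
      intro x hx
      have hx1 : -(1:ℝ)/2 ≤ x := by have := hx.1; linarith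
      have hxw : |x| ≤ w := by rw [abs_of_nonpos hx.2]; linarith [hx.1]
      have h1 := hdbound x hx1 hx.2
      have h2 : |x| ^ γ ≤ w ^ γ := Real.rpow_le_rpow (abs_nonneg x) hxw hγpos.le
      have h3 : |d x - d 0| ≤ t / 2 := by
        calc |d x - d 0| ≤ K * |x| ^ γ := h1
          _ ≤ K * w ^ γ := mul_le_mul_of_nonneg_left h2 hKpos.le
          _ ≤ t / 2 := hwγ
      have h4 := abs_sub_abs_le_abs_sub (d 0) (d x)
      have h5 : |d 0 - d x| = |d x - d 0| := abs_sub_comm _ _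
      linarith [h3, h4, h5, htd]
    have hnl := aux_norm_lower (gh - fh) d hdae (t/2) (-w) 0 (by linarith)
      (by linarith)
      (fun z hz => ⟨le_trans (by rw [show -(1:ℝ)/2 = -(1/2) by ring]; exact neg_le_neg hwle) hz.1,
        le_trans hz.2 (by norm_num)⟩) hlow
    rw [zero_sub, neg_neg] at hnl
    have key : t / 2 * (min (1/2 : ℝ) ((t / (2 * K)) ^ (1/γ))) ^ ((1:ℝ)/2) ≤ ε := by
      rw [← hw]; exact hnl.trans hn
    have := aux_arith hKpos hγpos hε hε1 ht0 key
    calc t ≤ auxC K γ * ε ^ (2*γ/(2*γ+1)) := this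
      _ ≤ Cf * ε ^ (2*γ/(2*γ+1)) := by
          refine mul_le_mul_of_nonneg_right ?_ hεppos.le
          rw [hCf, hK]; exact le_max_left _ _
  · -- right side: γ = min α₂ β₂
    set K := M₂ + N₂ with hK
    have hKpos : 0 < K := by positivity
    have hγα : γ ≤ α₂ := by rw [hγdef, hγeq]; exact min_le_left _ _
    have hγβ : γ ≤ β₂ := by rw [hγdef, hγeq]; exact min_le_right _ _
    have hdbound : ∀ x : ℝ, 0 ≤ x → x ≤ 1/2 → |d x - d 0| ≤ K * |x| ^ γ := by
      intro x hx1 hx2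
      have habs : |x| ≤ 1 := by rw [abs_of_nonneg hx1]; linarith
      have hf := hf2 0 x le_rfl hx1 hx2
      have hg := hg2 0 x le_rfl hx1 hx2
      rw [zero_sub, abs_neg, abs_sub_comm (rf 0) (rf x)] at hf
      rw [zero_sub, abs_neg, abs_sub_comm (rg 0) (rg x)] at hg
      have ef : |x| ^ α₂ ≤ |x| ^ γ := aux_rpow_exp_mono (abs_nonneg x) habs hγpos hγα
      have eg : |x| ^ β₂ ≤ |x| ^ γ := aux_rpow_exp_mono (abs_nonneg x) habs hγpos hγβ
      have : |d x - d 0| ≤ |rg x - rg 0| + |rf x - rf 0| := by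
        rw [hd]
        have : rg x - rf x - (rg 0 - rf 0) = (rg x - rg 0) - (rf x - rf 0) := by ring
        simp only [this]
        exact abs_sub _ _
      have tf : M₂ * |x| ^ α₂ ≤ M₂ * |x| ^ γ := mul_le_mul_of_nonneg_left ef hM₂.le
      have tg : N₂ * |x| ^ β₂ ≤ N₂ * |x| ^ γ := mul_le_mul_of_nonneg_left eg hN₂.le
      rw [hK]
      nlinarith [abs_nonneg (rf x - rf 0), abs_nonneg (rg x - rg 0)]
    set w := min (1/2 : ℝ) ((t / (2 * K)) ^ (1/γ)) with hw
    have hwpos : 0 < w := lt_min (by norm_num) (Real.rpow_pos_of_pos (by positivity) _)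
    have hwle : w ≤ 1/2 := min_le_left _ _
    have hwγ : K * w ^ γ ≤ t / 2 := by
      have h1 : w ^ γ ≤ t / (2 * K) := by
        have h2 : w ^ γ ≤ ((t / (2 * K)) ^ (1/γ)) ^ γ :=
          Real.rpow_le_rpow hwpos.le (min_le_right _ _) hγpos.le
        rwa [one_div, Real.rpow_inv_rpow (by positivity) hγpos.ne'] at h2
      calc K * w ^ γ ≤ K * (t / (2 * K)) := mul_le_mul_of_nonneg_left h1 hKpos.le
        _ = t / 2 := by field_simp
    have hlow : ∀ x ∈ Set.Icc 0 w, t / 2 ≤ |d x| := by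
      intro x hx
      have hx2 : x ≤ 1/2 := le_trans hx.2 hwle
      have hxw : |x| ≤ w := by rw [abs_of_nonneg hx.1]; exact hx.2
      have h1 := hdbound x hx.1 hx2
      have h2 : |x| ^ γ ≤ w ^ γ := Real.rpow_le_rpow (abs_nonneg x) hxw hγpos.le
      have h3 : |d x - d 0| ≤ t / 2 := by
        calc |d x - d 0| ≤ K * |x| ^ γ := h1
          _ ≤ K * w ^ γ := mul_le_mul_of_nonneg_left h2 hKpos.le
          _ ≤ t / 2 := hwγ
      have h4 := abs_sub_abs_le_abs_sub (d 0) (d x)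
      have h5 : |d 0 - d x| = |d x - d 0| := abs_sub_comm _ _
      linarith [h3, h4, h5, htd]
    have hnl := aux_norm_lower (gh - fh) d hdae (t/2) 0 w (by linarith)
      (by linarith)
      (fun z hz => ⟨le_trans (by norm_num) hz.1, le_trans hz.2 hwle⟩) hlow
    rw [sub_zero] at hnl
    have key : t / 2 * (min (1/2 : ℝ) ((t / (2 * K)) ^ (1/γ))) ^ ((1:ℝ)/2) ≤ ε := by
      rw [← hw]; exact hnl.trans hn
    have := aux_arith hKpos hγpos hε hε1 ht0 key
    calc t ≤ auxC K γ * ε ^ (2*γ/(2*γ+1)) := this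
      _ ≤ Cf * ε ^ (2*γ/(2*γ+1)) := by
          refine mul_le_mul_of_nonneg_right ?_ hεppos.le
          rw [hCf, hK]; exact le_max_right _ _


/-- The constant for the lower-bound construction. -/
def auxc0 (Km γ : ℝ) : ℝ :=
  min Km ((Km ^ (1/(2*γ)) / 2 ^ ((1:ℝ)/2)) ^ (1/(1+1/(2*γ))))

lemma auxc0_pos {Km γ : ℝ} (hKm : 0 < Km) (hγ : 0 < γ) : 0 < auxc0 Km γ := by
  apply lt_min hKm
  positivity

lemma aux_bump_zero {K a h W x : ℝ} (hK : 0 < K) (ha : 0 < a) (hh : 0 < h)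
    (hW : (h / K) ^ (1/a) ≤ W) (hx : W ≤ |x|) : max (h - K * |x| ^ a) 0 = 0 := by
  apply max_eq_right
  have h1 : ((h / K) ^ (1/a)) ^ a ≤ |x| ^ a :=
    Real.rpow_le_rpow (by positivity) (le_trans hW hx) ha.le
  rw [one_div, Real.rpow_inv_rpow (by positivity) ha.ne'] at h1
  have h2 : h ≤ K * |x| ^ a := by
    rw [div_le_iff₀ hK] at h1
    linarith [h1]
  linarith

lemma aux_width {K Km a γ h : ℝ} (hK : 0 < Km) (hKK : Km ≤ K) (ha : 0 < a) (haγ : a ≤ γ)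
    (hh : 0 < h) (hhK : h ≤ Km) : (h / K) ^ (1/a) ≤ (h / Km) ^ (1/γ) := by
  have hγpos : 0 < γ := lt_of_lt_of_le ha haγ
  have hKpos : 0 < K := lt_of_lt_of_le hK hKK
  have hbase : 0 < h / K := div_pos hh hKpos
  have hbase1 : h / K ≤ 1 := by
    rw [div_le_one (by linarith)]; linarith
  have h1 : (h / K) ^ (1/a) ≤ (h / K) ^ (1/γ) := by
    apply Real.rpow_le_rpow_of_exponent_ge hbase hbase1
    exact one_div_le_one_div_of_le ha haγ
  have h2 : (h / K) ^ (1/γ) ≤ (h / Km) ^ (1/γ) := by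
    apply Real.rpow_le_rpow hbase.le _ (by positivity)
    exact div_le_div_of_nonneg_left hh.le hK hKK
  linarith

lemma aux_lower
    {α₁ α₂ β₁ β₂ M₁ M₂ N₁ N₂ : ℝ}
    (hα₂ : 0 < α₂) (hα : α₂ ≤ α₁) (hα₁ : α₁ ≤ 1)
    (hβ₁ : 0 < β₁) (hβ : β₁ ≤ β₂) (hβ₂ : β₂ ≤ 1)
    (hM₁ : 0 < M₁) (hM₂ : 0 < M₂) (hN₁ : 0 < N₁) (hN₂ : 0 < N₂)
    (T : H → ℝ)
    (hT : ∀ (f : H) (g : ℝ → ℝ), ContinuousOn g (Set.Icc (-(1:ℝ)/2) (1/2)) →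
      (∀ᵐ x ∂(volume.restrict (Set.Icc (-(1:ℝ)/2) (1/2))), f x = g x) → T f = g 0)
    {ε : ℝ} (hε : 0 < ε) (hε1 : ε ≤ 1) :
    ∃ fh ∈ twoSidedHolderClass α₁ M₁ α₂ M₂, ∃ gh ∈ twoSidedHolderClass β₁ N₁ β₂ N₂,
      ‖gh - fh‖ ≤ ε ∧
      T gh - T fh = auxc0 (min (min M₁ N₁) (min M₂ N₂)) (max (min α₁ β₁) (min α₂ β₂)) *
        ε ^ (2 * max (min α₁ β₁) (min α₂ β₂) / (2 * max (min α₁ β₁) (min α₂ β₂) + 1)) := by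
  have hα₁pos : 0 < α₁ := lt_of_lt_of_le hα₂ hα
  have hβ₂pos : 0 < β₂ := lt_of_lt_of_le hβ₁ hβ
  set aL := min α₁ β₁ with haLdef
  set aR := min α₂ β₂ with haRdef
  set γ := max aL aR with hγdef
  have haLpos : 0 < aL := lt_min hα₁pos hβ₁
  have haRpos : 0 < aR := lt_min hα₂ hβ₂pos
  have haL1 : aL ≤ 1 := le_trans (min_le_left _ _) hα₁
  have haR1 : aR ≤ 1 := le_trans (min_le_right _ _) hβ₂
  have hγpos : 0 < γ := lt_of_lt_of_le haLpos (le_max_left _ _)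
  set Km := min (min M₁ N₁) (min M₂ N₂) with hKmdef
  have hKmpos : 0 < Km := lt_min (lt_min hM₁ hN₁) (lt_min hM₂ hN₂)
  set q := 1/(2*γ) with hq
  set p := 2*γ/(2*γ+1) with hp
  have hqpos : 0 < q := by rw [hq]; positivity
  have hppos : 0 < p := by rw [hp]; positivity
  set c₀ := auxc0 Km γ with hc₀def
  have hc₀pos : 0 < c₀ := auxc0_pos hKmpos hγpos
  set h := c₀ * ε ^ p with hhdef
  have hh : 0 < h := mul_pos hc₀pos (Real.rpow_pos_of_pos hε _)
  have hhKm : h ≤ Km := by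
    have h1 : ε ^ p ≤ 1 := Real.rpow_le_one hε.le hε1 hppos.le
    calc h = c₀ * ε ^ p := hhdef
      _ ≤ c₀ * 1 := mul_le_mul_of_nonneg_left h1 hc₀pos.le
      _ = c₀ := mul_one _
      _ ≤ Km := min_le_left _ _
  set KL := if α₁ ≤ β₁ then M₁ else N₁ with hKL
  set KR := if α₂ ≤ β₂ then M₂ else N₂ with hKR
  have hKLpos : 0 < KL := by rw [hKL]; split_ifs <;> assumption
  have hKRpos : 0 < KR := by rw [hKR]; split_ifs <;> assumption
  have hKmKL : Km ≤ KL := by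
    rw [hKL]; split_ifs
    · exact le_trans (min_le_left _ _) (min_le_left _ _)
    · exact le_trans (min_le_left _ _) (min_le_right _ _)
  have hKmKR : Km ≤ KR := by
    rw [hKR]; split_ifs
    · exact le_trans (min_le_right _ _) (min_le_left _ _)
    · exact le_trans (min_le_right _ _) (min_le_right _ _)
  set dL := fun x : ℝ => max (h - KL * |x| ^ aL) 0 with hdL
  set dR := fun x : ℝ => max (h - KR * |x| ^ aR) 0 with hdR
  set fL := fun x : ℝ => if α₁ ≤ β₁ then -dL x else -h with hfL
  set fR := fun x : ℝ => if α₂ ≤ β₂ then -dR x else -h with hfR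
  set f := fun x : ℝ => if x ≤ 0 then fL x else fR x with hf
  set dd := fun x : ℝ => if x ≤ 0 then dL x else dR x with hdd
  set g := fun x : ℝ => f x + dd x with hg
  have hdLx : ∀ x, dL x = max (h - KL * |x| ^ aL) 0 := fun x => rfl
  have hdRx : ∀ x, dR x = max (h - KR * |x| ^ aR) 0 := fun x => rfl
  have hdL0 : dL 0 = h := by
    rw [hdLx 0]
    simp only [abs_zero, Real.zero_rpow haLpos.ne', mul_zero, sub_zero]
    exact max_eq_left hh.le
  have hdR0 : dR 0 = h := by
    rw [hdRx 0]
    simp only [abs_zero, Real.zero_rpow haRpos.ne', mul_zero, sub_zero]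
    exact max_eq_left hh.le
  have hfLx : ∀ x, fL x = if α₁ ≤ β₁ then -dL x else -h := fun x => rfl
  have hfRx : ∀ x, fR x = if α₂ ≤ β₂ then -dR x else -h := fun x => rfl
  have hfL0 : fL 0 = -h := by
    rw [hfLx 0]; split_ifs
    · rw [hdL0]
    · rfl
  have hfR0 : fR 0 = -h := by
    rw [hfRx 0]; split_ifs
    · rw [hdR0]
    · rfl
  have hfx : ∀ x, f x = if x ≤ 0 then fL x else fR x := fun x => rfl
  have hddx : ∀ x, dd x = if x ≤ 0 then dL x else dR x := fun x => rfl
  have hgx : ∀ x, g x = f x + dd x := fun x => rfl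
  have hf0 : f 0 = -h := by rw [hfx 0, if_pos le_rfl]; exact hfL0
  have hdd0 : dd 0 = h := by rw [hddx 0, if_pos le_rfl]; exact hdL0
  have hg0 : g 0 = 0 := by rw [hgx 0, hf0, hdd0]; ring
  have hdLrange : ∀ x, 0 ≤ dL x ∧ dL x ≤ h := by
    intro x
    rw [hdLx x]
    refine ⟨le_max_right _ _, max_le ?_ hh.le⟩
    have : 0 ≤ KL * |x| ^ aL := by positivity
    linarith
  have hdRrange : ∀ x, 0 ≤ dR x ∧ dR x ≤ h := by
    intro x
    rw [hdRx x]
    refine ⟨le_max_right _ _, max_le ?_ hh.le⟩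
    have : 0 ≤ KR * |x| ^ aR := by positivity
    linarith
  have hfrange : ∀ x, -h ≤ f x ∧ f x ≤ 0 := by
    intro x
    rw [hfx x, hfLx x, hfRx x]
    split_ifs
    · exact ⟨by linarith [(hdLrange x).2], by linarith [(hdLrange x).1]⟩
    · exact ⟨le_refl _, by linarith⟩
    · exact ⟨by linarith [(hdRrange x).2], by linarith [(hdRrange x).1]⟩
    · exact ⟨le_refl _, by linarith⟩
  have hddrange : ∀ x, 0 ≤ dd x ∧ dd x ≤ h := by
    intro x
    rw [hddx x]
    split_ifs
    · exact hdLrange x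
    · exact hdRrange x
  have hfneg : ∀ x : ℝ, x ≤ 0 → f x = fL x := by
    intro x hx
    rw [hfx x, if_pos hx]
  have hfpos : ∀ x : ℝ, 0 ≤ x → f x = fR x := by
    intro x hx
    by_cases hx0 : x ≤ 0
    · have hxx : x = 0 := le_antisymm hx0 hx
      rw [hxx, hf0, hfR0]
    · rw [hfx x, if_neg hx0]
  have hgneg : ∀ x : ℝ, x ≤ 0 → g x = fL x + dL x := by
    intro x hx
    rw [hgx x, hfneg x hx, hddx x, if_pos hx]
  have hgpos : ∀ x : ℝ, 0 ≤ x → g x = fR x + dR x := by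
    intro x hx
    by_cases hx0 : x ≤ 0
    · have hxx : x = 0 := le_antisymm hx0 hx
      rw [hxx, hg0, hfR0, hdR0]; ring
    · rw [hgx x, hfx x, if_neg hx0, hddx x, if_neg hx0]
  -- Hölder conditions for f
  have hf1 : ∀ x y : ℝ, -(1:ℝ)/2 ≤ x → x ≤ y → y ≤ 0 → |f x - f y| ≤ M₁ * |x - y| ^ α₁ := by
    intro x y hx hxy hy0
    rw [hfneg x (le_trans hxy hy0), hfneg y hy0, hfLx x, hfLx y]
    by_cases hc : α₁ ≤ β₁
    · rw [if_pos hc, if_pos hc]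
      have e1 : -dL x - -dL y = -(dL x - dL y) := by ring
      have hb := aux_bump_holder (K := KL) (a := aL) h hKLpos.le haLpos haL1 x y
      have eK : M₁ = KL := by rw [hKL, if_pos hc]
      have ea : α₁ = aL := by rw [haLdef]; exact (min_eq_left hc).symm
      rw [e1, abs_neg, eK, ea, hdLx x, hdLx y]
      exact hb
    · rw [if_neg hc, if_neg hc]
      simp only [sub_self, abs_zero]
      positivity
  have hf2 : ∀ x y : ℝ, (0:ℝ) ≤ x → x ≤ y → y ≤ 1/2 → |f x - f y| ≤ M₂ * |x - y| ^ α₂ := by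
    intro x y hx hxy hy
    rw [hfpos x hx, hfpos y (le_trans hx hxy), hfRx x, hfRx y]
    by_cases hc : α₂ ≤ β₂
    · rw [if_pos hc, if_pos hc]
      have e1 : -dR x - -dR y = -(dR x - dR y) := by ring
      have hb := aux_bump_holder (K := KR) (a := aR) h hKRpos.le haRpos haR1 x y
      have eK : M₂ = KR := by rw [hKR, if_pos hc]
      have ea : α₂ = aR := by rw [haRdef]; exact (min_eq_left hc).symm
      rw [e1, abs_neg, eK, ea, hdRx x, hdRx y]
      exact hb
    · rw [if_neg hc, if_neg hc]
      simp only [sub_self, abs_zero]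
      positivity
  -- Hölder conditions for g
  have hg1 : ∀ x y : ℝ, -(1:ℝ)/2 ≤ x → x ≤ y → y ≤ 0 → |g x - g y| ≤ N₁ * |x - y| ^ β₁ := by
    intro x y hx hxy hy0
    rw [hgneg x (le_trans hxy hy0), hgneg y hy0, hfLx x, hfLx y]
    by_cases hc : α₁ ≤ β₁
    · rw [if_pos hc, if_pos hc]
      have e1 : (-dL x + dL x) - (-dL y + dL y) = 0 := by ring
      rw [e1, abs_zero]
      positivity
    · rw [if_neg hc, if_neg hc]
      have e1 : (-h + dL x) - (-h + dL y) = dL x - dL y := by ring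
      have hb := aux_bump_holder (K := KL) (a := aL) h hKLpos.le haLpos haL1 x y
      have eK : N₁ = KL := by rw [hKL, if_neg hc]
      have ea : β₁ = aL := by
        rw [haLdef]; exact (min_eq_right (le_of_lt (not_le.mp hc))).symm
      rw [e1, eK, ea, hdLx x, hdLx y]
      exact hb
  have hg2 : ∀ x y : ℝ, (0:ℝ) ≤ x → x ≤ y → y ≤ 1/2 → |g x - g y| ≤ N₂ * |x - y| ^ β₂ := by
    intro x y hx hxy hy
    rw [hgpos x hx, hgpos y (le_trans hx hxy), hfRx x, hfRx y]
    by_cases hc : α₂ ≤ β₂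
    · rw [if_pos hc, if_pos hc]
      have e1 : (-dR x + dR x) - (-dR y + dR y) = 0 := by ring
      rw [e1, abs_zero]
      positivity
    · rw [if_neg hc, if_neg hc]
      have e1 : (-h + dR x) - (-h + dR y) = dR x - dR y := by ring
      have hb := aux_bump_holder (K := KR) (a := aR) h hKRpos.le haRpos haR1 x y
      have eK : N₂ = KR := by rw [hKR, if_neg hc]
      have ea : β₂ = aR := by
        rw [haRdef]; exact (min_eq_right (le_of_lt (not_le.mp hc))).symm
      rw [e1, eK, ea, hdRx x, hdRx y]
      exact hb
  -- continuity and Memℒp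
  have hfc : ContinuousOn f (Set.Icc (-(1:ℝ)/2) (1/2)) :=
    aux_contOn hM₁.le hM₂.le hα₁pos hα₂ hf1 hf2
  have hgc : ContinuousOn g (Set.Icc (-(1:ℝ)/2) (1/2)) :=
    aux_contOn hN₁.le hN₂.le hβ₁ hβ₂pos hg1 hg2
  haveI : Fact (volume (Set.Icc (-(1:ℝ)/2) (1/2)) < ⊤) :=
    ⟨by rw [Real.volume_Icc]; exact ENNReal.ofReal_lt_top⟩
  have hfm : MemLp f 2 (volume.restrict (Set.Icc (-(1:ℝ)/2) (1/2))) := by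
    apply MemLp.of_bound (hfc.aestronglyMeasurable measurableSet_Icc) h
    apply ae_of_all
    intro x
    rw [Real.norm_eq_abs, abs_le]
    exact ⟨(hfrange x).1, le_trans (hfrange x).2 hh.le⟩
  have hgm : MemLp g 2 (volume.restrict (Set.Icc (-(1:ℝ)/2) (1/2))) := by
    apply MemLp.of_bound (hgc.aestronglyMeasurable measurableSet_Icc) h
    apply ae_of_all
    intro x
    rw [Real.norm_eq_abs, abs_le, hgx x]
    constructor
    · linarith [(hfrange x).1, (hddrange x).1]
    · linarith [(hfrange x).2, (hddrange x).2]
  set fh := hfm.toLp f with hfhdef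
  set gh := hgm.toLp g with hghdef
  have hfmem : fh ∈ twoSidedHolderClass α₁ M₁ α₂ M₂ := ⟨f, hf1, hf2, hfm.coeFn_toLp⟩
  have hgmem : gh ∈ twoSidedHolderClass β₁ N₁ β₂ N₂ := ⟨g, hg1, hg2, hgm.coeFn_toLp⟩
  -- norm bound
  have hdae : ∀ᵐ x ∂(volume.restrict (Set.Icc (-(1:ℝ)/2) (1/2))), (gh - fh) x = dd x := by
    filter_upwards [Lp.coeFn_sub gh fh, hfm.coeFn_toLp, hgm.coeFn_toLp] with x e1 e2 e3
    rw [e1, Pi.sub_apply, e2, e3, hgx x]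
    ring
  set W := (h / Km) ^ (1/γ) with hWdef
  have hWpos : 0 < W := Real.rpow_pos_of_pos (by positivity) _
  have hWL : (h / KL) ^ (1/aL) ≤ W :=
    aux_width hKmpos hKmKL haLpos (le_max_left _ _) hh hhKm
  have hWR : (h / KR) ^ (1/aR) ≤ W :=
    aux_width hKmpos hKmKR haRpos (le_max_right _ _) hh hhKm
  have hsupp : ∀ x, x ∉ Set.Icc (-W) W → dd x = 0 := by
    intro x hx
    rw [Set.mem_Icc] at hx
    push_neg at hx
    have hxW : W ≤ |x| := by
      rcases le_or_gt (-W) x with h' | h'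
      · have := hx h'
        rw [abs_of_nonneg (by linarith)]
        linarith
      · rw [abs_of_nonpos (by linarith)]
        linarith
    rw [hddx x]
    split_ifs
    · rw [hdLx x]
      exact aux_bump_zero hKLpos haLpos hh hWL hxW
    · rw [hdRx x]
      exact aux_bump_zero hKRpos haRpos hh hWR hxW
  have hbd : ∀ x, |dd x| ≤ h := by
    intro x
    rw [abs_le]
    exact ⟨by linarith [(hddrange x).1], (hddrange x).2⟩
  have hnorm := aux_norm_upper (gh - fh) dd hdae h (-W) W hh.le (by linarith) hbd hsupp
  rw [show W - -W = 2 * W by ring] at hnorm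
  -- final arithmetic
  have hid : (1 + q) * p = 1 := by rw [hp, hq]; exact aux_exp_identity hγpos
  have hid' : p * (1 + q) = 1 := by rw [mul_comm]; exact hid
  have hKq : (0:ℝ) < Km ^ q := Real.rpow_pos_of_pos hKmpos q
  have h2h : (0:ℝ) < 2 ^ ((1:ℝ)/2) := by positivity
  have hW2 : (2 * W) ^ ((1:ℝ)/2) = 2 ^ ((1:ℝ)/2) * W ^ ((1:ℝ)/2) :=
    Real.mul_rpow (by norm_num) hWpos.le
  have hWq : W ^ ((1:ℝ)/2) = (h/Km) ^ q := by
    rw [hWdef, ← Real.rpow_mul (by positivity)]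
    congr 1
    rw [hq]
    ring
  have e4 : (h/Km) ^ q = h ^ q / Km ^ q := Real.div_rpow hh.le hKmpos.le q
  have e6 : h * h ^ q = h ^ (1+q) := by rw [Real.rpow_add hh, Real.rpow_one]
  have e7 : h ^ (1+q) = c₀ ^ (1+q) * ε := by
    rw [hhdef, Real.mul_rpow hc₀pos.le (Real.rpow_nonneg hε.le p), ← Real.rpow_mul hε.le,
      mul_comm p (1+q), hid, Real.rpow_one]
  have e8 : c₀ ^ (1+q) ≤ Km ^ q / 2 ^ ((1:ℝ)/2) := by
    have h1 : c₀ ≤ (Km ^ q / 2 ^ ((1:ℝ)/2)) ^ (1/(1+q)) := by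
      rw [hc₀def]
      unfold auxc0
      rw [← hq]
      exact min_le_right _ _
    have h2 : c₀ ^ (1+q) ≤ ((Km ^ q / 2 ^ ((1:ℝ)/2)) ^ (1/(1+q))) ^ (1+q) :=
      Real.rpow_le_rpow hc₀pos.le h1 (by positivity)
    rwa [one_div ((1:ℝ)+q),
      Real.rpow_inv_rpow (by positivity) (by positivity : (0:ℝ) < 1 + q).ne'] at h2
  have hfinal : h * (2 * W) ^ ((1:ℝ)/2) ≤ ε := by
    calc h * (2 * W) ^ ((1:ℝ)/2) = 2 ^ ((1:ℝ)/2) * (h * h ^ q) / Km ^ q := by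
          rw [hW2, hWq, e4]; ring
      _ = 2 ^ ((1:ℝ)/2) * (c₀ ^ (1+q) * ε) / Km ^ q := by rw [e6, e7]
      _ ≤ 2 ^ ((1:ℝ)/2) * ((Km ^ q / 2 ^ ((1:ℝ)/2)) * ε) / Km ^ q := by
          gcongr
      _ = ε := by field_simp
  refine ⟨fh, hfmem, gh, hgmem, le_trans hnorm hfinal, ?_⟩
  have hTf : T fh = f 0 := hT fh f hfc hfm.coeFn_toLp
  have hTg : T gh = g 0 := hT gh g hgc hgm.coeFn_toLp
  rw [hTf, hTg, hg0, hf0, hhdef]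
  ring



/-- Example 2: for `T f = f(0)`, `F₁ = F(α₁, M₁, α₂, M₂)` and `F₂ = F(β₁, N₁, β₂, N₂)` with
`0 < α₂ ≤ α₁ ≤ 1` and `0 < β₁ ≤ β₂ ≤ 1`, the between-class modulus satisfies
`ω₊(ε, F₁, F₂) ≍ ε^{2γ/(2γ+1)}` with `γ = max(min(α₁, β₁), min(α₂, β₂))`. -/
theorem example2_between_class_modulus
    (α₁ α₂ β₁ β₂ M₁ M₂ N₁ N₂ : ℝ)
    (hα₂ : 0 < α₂) (hα : α₂ ≤ α₁) (hα₁ : α₁ ≤ 1)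
    (hβ₁ : 0 < β₁) (hβ : β₁ ≤ β₂) (hβ₂ : β₂ ≤ 1)
    (hM₁ : 0 < M₁) (hM₂ : 0 < M₂) (hN₁ : 0 < N₁) (hN₂ : 0 < N₂)
    (T : H → ℝ)
    (hT : ∀ (f : H) (g : ℝ → ℝ), ContinuousOn g (Set.Icc (-(1:ℝ)/2) (1/2)) →
      (∀ᵐ x ∂(volume.restrict (Set.Icc (-(1:ℝ)/2) (1/2))), f x = g x) → T f = g 0) :
    ∃ c C ε₀ : ℝ, 0 < c ∧ c ≤ C ∧ 0 < ε₀ ∧ ∀ ε : ℝ, 0 < ε → ε ≤ ε₀ →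
      c * ε ^ (2 * max (min α₁ β₁) (min α₂ β₂) / (2 * max (min α₁ β₁) (min α₂ β₂) + 1))
          ≤ omegaPlus T (twoSidedHolderClass α₁ M₁ α₂ M₂) (twoSidedHolderClass β₁ N₁ β₂ N₂) ε ∧
        omegaPlus T (twoSidedHolderClass α₁ M₁ α₂ M₂) (twoSidedHolderClass β₁ N₁ β₂ N₂) ε
          ≤ C * ε ^ (2 * max (min α₁ β₁) (min α₂ β₂)
              / (2 * max (min α₁ β₁) (min α₂ β₂) + 1)) := by
  have hα₁pos : 0 < α₁ := lt_of_lt_of_le hα₂ hα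
  have hβ₂pos : 0 < β₂ := lt_of_lt_of_le hβ₁ hβ
  set γ := max (min α₁ β₁) (min α₂ β₂) with hγdef
  set pe := 2 * γ / (2 * γ + 1) with hpe
  have hγpos : 0 < γ := lt_max_of_lt_left (lt_min hα₁pos hβ₁)
  set Km := min (min M₁ N₁) (min M₂ N₂) with hKmdef
  have hKmpos : 0 < Km := lt_min (lt_min hM₁ hN₁) (lt_min hM₂ hN₂)
  set Cu := max (auxC (M₁+N₁) γ) (auxC (M₂+N₂) γ) with hCu
  have hCupos : 0 < Cu := lt_max_of_lt_left (auxC_pos _ _)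
  set c₀ := auxc0 Km γ with hc₀
  have hc₀pos : 0 < c₀ := auxc0_pos hKmpos hγpos
  refine ⟨c₀, max Cu c₀, 1, hc₀pos, le_max_right _ _, one_pos, ?_⟩
  intro ε hε hε1
  have hεppos : 0 < ε ^ pe := Real.rpow_pos_of_pos hε _
  -- element bounds on the modulus sets
  have hboundFG : ∀ x ∈ modSet T (twoSidedHolderClass α₁ M₁ α₂ M₂)
      (twoSidedHolderClass β₁ N₁ β₂ N₂) ε, x ≤ Cu * ε ^ pe := by
    rintro x ⟨fh, hfmem, gh, hgmem, hn, rfl⟩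
    obtain ⟨rf, hf1, hf2, hfa⟩ := hfmem
    obtain ⟨rg, hg1, hg2, hga⟩ := hgmem
    have hTf : T fh = rf 0 := hT fh rf (aux_contOn hM₁.le hM₂.le hα₁pos hα₂ hf1 hf2) hfa
    have hTg : T gh = rg 0 := hT gh rg (aux_contOn hN₁.le hN₂.le hβ₁ hβ₂pos hg1 hg2) hga
    rw [hTf, hTg]
    calc rg 0 - rf 0 ≤ |rg 0 - rf 0| := le_abs_self _
      _ ≤ Cu * ε ^ pe :=
        aux_elem hα₂ hα hα₁ hβ₁ hβ hβ₂ hM₁ hM₂ hN₁ hN₂ rf rg hf1 hf2 hg1 hg2 fh gh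
          hfa hga hε hε1 hn
  have hboundGF : ∀ x ∈ modSet T (twoSidedHolderClass β₁ N₁ β₂ N₂)
      (twoSidedHolderClass α₁ M₁ α₂ M₂) ε, x ≤ Cu * ε ^ pe := by
    rintro x ⟨gh, hgmem, fh, hfmem, hn, rfl⟩
    obtain ⟨rf, hf1, hf2, hfa⟩ := hfmem
    obtain ⟨rg, hg1, hg2, hga⟩ := hgmem
    have hTf : T fh = rf 0 := hT fh rf (aux_contOn hM₁.le hM₂.le hα₁pos hα₂ hf1 hf2) hfa
    have hTg : T gh = rg 0 := hT gh rg (aux_contOn hN₁.le hN₂.le hβ₁ hβ₂pos hg1 hg2) hga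
    rw [hTf, hTg]
    have hn' : ‖gh - fh‖ ≤ ε := by rwa [norm_sub_rev]
    calc rf 0 - rg 0 ≤ |rg 0 - rf 0| := by
          rw [abs_sub_comm]; exact le_abs_self _
      _ ≤ Cu * ε ^ pe :=
        aux_elem hα₂ hα hα₁ hβ₁ hβ hβ₂ hM₁ hM₂ hN₁ hN₂ rf rg hf1 hf2 hg1 hg2 fh gh
          hfa hga hε hε1 hn'
  have hbddFG : BddAbove (modSet T (twoSidedHolderClass α₁ M₁ α₂ M₂)
      (twoSidedHolderClass β₁ N₁ β₂ N₂) ε) := ⟨Cu * ε ^ pe, fun x hx => hboundFG x hx⟩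
  -- lower bound
  obtain ⟨fh, hfmem, gh, hgmem, hn, hval⟩ :=
    aux_lower hα₂ hα hα₁ hβ₁ hβ hβ₂ hM₁ hM₂ hN₁ hN₂ T hT hε hε1
  have hmem : c₀ * ε ^ pe ∈ modSet T (twoSidedHolderClass α₁ M₁ α₂ M₂)
      (twoSidedHolderClass β₁ N₁ β₂ N₂) ε := ⟨fh, hfmem, gh, hgmem, hn, hval.symm⟩
  have hlow : c₀ * ε ^ pe ≤ omegaMod T (twoSidedHolderClass α₁ M₁ α₂ M₂)
      (twoSidedHolderClass β₁ N₁ β₂ N₂) ε := le_csSup hbddFG hmem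
  constructor
  · exact le_trans hlow (le_max_left _ _)
  · have h1 : omegaMod T (twoSidedHolderClass α₁ M₁ α₂ M₂)
        (twoSidedHolderClass β₁ N₁ β₂ N₂) ε ≤ Cu * ε ^ pe :=
      Real.sSup_le hboundFG (mul_nonneg hCupos.le hεppos.le)
    have h2 : omegaMod T (twoSidedHolderClass β₁ N₁ β₂ N₂)
        (twoSidedHolderClass α₁ M₁ α₂ M₂) ε ≤ Cu * ε ^ pe :=
      Real.sSup_le hboundGF (mul_nonneg hCupos.le hεppos.le)
    calc omegaPlus T (twoSidedHolderClass α₁ M₁ α₂ M₂) (twoSidedHolderClass β₁ N₁ β₂ N₂) ε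
        ≤ Cu * ε ^ pe := max_le h1 h2
      _ ≤ max Cu c₀ * ε ^ pe := mul_le_mul_of_nonneg_right (le_max_left _ _) hεppos.le
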